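/- arXiv:1906.05853 — 3 statements merged into one kernel-verified Lean document; each statement's English description precedes it below -/
import Mathlib

section
/- Let A be a commutative ring, and let G be a finitely generated A-module with a surjection q : G → F onto a module F. Let φ : G → Hom(⋀^{r-1} G, ⋀^r G) be given by g ↦ (g₁∧…∧g_{r-1} ↦ g₁∧…∧g_{r-1}∧g), and let ψ : Hom(⋀^{r-1}G, ⋀^rG) → Hom(⋀^{r-1}G, W) be post-composition with a morphism ⋀^r G → W. If F is a free module of rank r and W = ⋀^r F with ⋀^r G → ⋀^r F the induced map ⋀^r q, then ker(ψ ∘ φ) = ker(q), so F ≅ Im(ψ ∘ φ). -/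
open ExteriorAlgebra

private lemma list_prod_iota_mem_pow {A G : Type*} [CommRing A] [AddCommGroup G] [Module A G]
    (n : ℕ) (v : Fin n → G) :
    (List.ofFn fun j => ι A (v j)).prod ∈
      ((LinearMap.range (ι A : G →ₗ[A] ExteriorAlgebra A G)) ^ n :
        Submodule A (ExteriorAlgebra A G)) := by
  induction n with
  | zero => simp only [pow_zero, Nat.zero_sub]; exact Submodule.one_le.mp le_rfl
  | succ n ih =>
    rw [List.ofFn_succ, List.prod_cons, pow_succ']
    exact Submodule.mul_mem_mul ⟨v 0, rfl⟩ (ih _)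

/-- The determinant trick (Lemma 4.2 of the paper) in the case where the quotient
is free: let `q : G → F` be a surjection of `A`-modules with `G` finitely
generated and `F` free of rank `r`.  The composite `ψ ∘ φ` sends `g : G` to the
homomorphism `⋀^{r-1} G → ⋀^r F`, `x ↦ (⋀^r q)(x ∧ g)`.  Its kernel equals
`ker q`; i.e. `g ∈ ker q` iff `(⋀^r q)(x ∧ g) = 0` for every
`x ∈ ⋀^{r-1} G ⊆ ⋀ G`.  Consequently `F ≅ Im (ψ ∘ φ)`. -/
theorem determinant_trick_free {A G F : Type*} [CommRing A]
    [AddCommGroup G] [Module A G] [AddCommGroup F] [Module A F]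
    [Module.Finite A G] [Module.Free A F] (r : ℕ)
    (hr : Module.finrank A F = r)
    (q : G →ₗ[A] F) (hq : Function.Surjective q) :
    ∀ g : G,
      (∀ x ∈ ((LinearMap.range (ι A : G →ₗ[A] ExteriorAlgebra A G)) ^ (r - 1) :
          Submodule A (ExteriorAlgebra A G)),
        ExteriorAlgebra.map q (x * ι A g) = 0) ↔ q g = 0 := by
  intro g
  constructor
  · intro H
    rcases subsingleton_or_nontrivial A with hA | hA
    · haveI := Module.subsingleton A F
      exact Subsingleton.elim _ _
    rcases Nat.eq_zero_or_pos r with rfl | hrpos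
    · -- `r = 0`: take `x = 1`.
      have h1 : (1 : ExteriorAlgebra A G) ∈
          ((LinearMap.range (ι A : G →ₗ[A] ExteriorAlgebra A G)) ^ (0 - 1) :
            Submodule A (ExteriorAlgebra A G)) := by
        simp only [pow_zero, Nat.zero_sub]; exact Submodule.one_le.mp le_rfl
      have h2 := H 1 h1
      rwa [one_mul, map_apply_ι, ι_eq_zero_iff] at h2
    obtain ⟨m, rfl⟩ := Nat.exists_eq_succ_of_ne_zero hrpos.ne'
    haveI : Module.Finite A F := Module.finite_of_finrank_eq_succ hr
    set b : Module.Basis (Fin (m + 1)) A F := Module.finBasisOfFinrankEq A F hr with hb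
    rw [← b.forall_coord_eq_zero_iff]
    intro i
    -- choose preimages of the basis vectors other than `b i`
    choose u hu using fun j : Fin m => hq (b (i.succAbove j))
    have hx := list_prod_iota_mem_pow (A := A) m u
    have h0 := H _ (by simpa using hx)
    -- rewrite the hypothesis as a statement about `ιMulti`
    set w : Fin (m + 1) → F := Fin.snoc (fun j => b (i.succAbove j)) (q g) with hwdef
    have hw : ExteriorAlgebra.map q ((List.ofFn fun j => ι A (u j)).prod * ι A g)
        = ιMulti A (m + 1) w := by
      rw [ιMulti_apply, List.ofFn_succ', List.concat_eq_append, List.prod_append,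
        List.prod_singleton, map_mul, map_list_prod, List.map_ofFn]
      simp [hwdef, Function.comp_def, map_apply_ι, hu, Fin.snoc_castSucc, Fin.snoc_last]
    have hdw : b.det w = 0 := by
      classical
      set f : ∀ n, F [⋀^Fin n]→ₗ[A] A :=
        Function.update (fun _ => (0 : F [⋀^Fin _]→ₗ[A] A)) (m + 1) b.det with hf
      have h3 : liftAlternating f (ιMulti A (m + 1) w) = 0 := by
        rw [← hw, h0, map_zero]
      rwa [liftAlternating_apply_ιMulti, hf, Function.update_self] at h3
    classical
    -- linear map in the last coordinate
    set L : F →ₗ[A] A :=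
      (b.det : MultilinearMap A (fun _ : Fin (m + 1) => F) A).toLinearMap w (Fin.last m) with hL
    have hLapp : ∀ y : F, L y = b.det (Fin.snoc (fun j => b (i.succAbove j)) y) := by
      intro y
      simp [hL, hwdef, MultilinearMap.toLinearMap_apply, Fin.update_snoc_last]
    have hLw : L (q g) = 0 := by
      rw [hLapp, ← hwdef, hdw]
    have hrep : q g = ∑ k, b.repr (q g) k • b k := (b.sum_repr (q g)).symm
    have hLk : ∀ k, k ≠ i → L (b k) = 0 := by
      intro k hk
      obtain ⟨j, hj⟩ := Fin.exists_succAbove_eq hk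
      rw [hLapp]
      refine b.det.map_eq_zero_of_eq _ (i := Fin.castSucc j) (j := Fin.last m) ?_
        ((Fin.castSucc_lt_last j).ne)
      rw [Fin.snoc_castSucc, Fin.snoc_last, hj]
    -- `L (b i)` is a unit: the determinant of a permuted basis
    have hLi : IsUnit (L (b i)) := by
      set τ : Fin (m + 1) → Fin (m + 1) := Fin.snoc (fun j => i.succAbove j) i with hτ
      have hinj : Function.Injective τ := by
        intro a a' h
        induction a using Fin.lastCases with
        | last =>
          induction a' using Fin.lastCases with
          | last => rfl
          | cast j =>
            exfalso
            rw [hτ, Fin.snoc_last, Fin.snoc_castSucc] at h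
            exact Fin.succAbove_ne i j h.symm
        | cast j =>
          induction a' using Fin.lastCases with
          | last =>
            exfalso
            rw [hτ, Fin.snoc_last, Fin.snoc_castSucc] at h
            exact Fin.succAbove_ne i j h
          | cast j' =>
            rw [hτ, Fin.snoc_castSucc, Fin.snoc_castSucc] at h
            rw [Fin.succAbove_right_injective h]
      set σ : Fin (m + 1) ≃ Fin (m + 1) :=
        Equiv.ofBijective τ (Finite.injective_iff_bijective.mp hinj) with hσ
      have hcoe : Fin.snoc (fun j => b (i.succAbove j)) (b i) = ⇑(b.reindex σ.symm) := by
        funext k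
        rw [Module.Basis.reindex_apply, Equiv.symm_symm]
        induction k using Fin.lastCases with
        | last => simp [hσ, hτ, Equiv.ofBijective_apply, Fin.snoc_last]
        | cast j => simp [hσ, hτ, Equiv.ofBijective_apply, Fin.snoc_castSucc]
      rw [hLapp, hcoe]
      exact b.isUnit_det (b.reindex σ.symm)
    have hsum : L (q g) = b.repr (q g) i • L (b i) := by
      conv_lhs => rw [hrep]
      rw [map_sum]
      rw [Finset.sum_eq_single i]
      · rw [map_smul]
      · intro k _ hk
        rw [map_smul, hLk k hk, smul_zero]
      · intro h; exact absurd (Finset.mem_univ i) h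
    have hz : b.repr (q g) i * L (b i) = 0 := by
      rw [← smul_eq_mul, ← hsum, hLw]
    simpa [Module.Basis.coord_apply] using (hLi.mul_left_eq_zero.mp hz)
  · intro h x hx
    rw [map_mul, map_apply_ι, h, map_zero, mul_zero]
end

section
/- Let X be a reduced complex space (or integral scheme) of pure dimension n, U ⊂ X a dense Zariski-open subset, and G a coherent sheaf on X. If q₁ : G → F₁ and q₂ : G → F₂ are two surjections onto pure n-dimensional sheaves such that ker(q₁)|_U = ker(q₂)|_U as subsheaves of G|_U, then ker(q₁) = ker(q₂), hence the two quotients coincide. -/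
/-- A module is pure of dimension `n` if it is nonzero and all of its nonzero
submodules have support of Krull dimension `n`. -/
def IsPureDimMod (A : Type*) [CommRing A] (n : ℕ)
    (M : Type*) [AddCommGroup M] [Module A M] : Prop :=
  Nontrivial M ∧
    ∀ p : Submodule A M, p ≠ ⊥ →
      Order.krullDim (Module.support A ↥p) = (n : WithBot ℕ∞)

/-- generic point lies in every dense open set of Spec of a domain -/
lemma bot_mem_of_dense_open {A : Type*} [CommRing A] [IsDomain A]
    {U : Set (PrimeSpectrum A)} (hUopen : IsOpen U) (hUdense : Dense U) :
    (⊥ : PrimeSpectrum A) ∈ U := by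
  by_contra hb
  have hclosure : closure {(⊥ : PrimeSpectrum A)} ⊆ Uᶜ :=
    hUopen.isClosed_compl.closure_subset_iff.mpr (Set.singleton_subset_iff.mpr hb)
  have : closure {(⊥ : PrimeSpectrum A)} = Set.univ := by
    rw [PrimeSpectrum.closure_singleton]
    exact PrimeSpectrum.zeroLocus_bot
  rw [this] at hclosure
  have hUempty : U = ∅ := by
    have : Uᶜ = Set.univ := Set.eq_univ_of_univ_subset hclosure
    simpa using congrArg compl this
  obtain ⟨p, hp⟩ := hUdense.nonempty
  rw [hUempty] at hp
  exact hp

/-- one-sided inclusion -/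
lemma aux_le {A : Type*} [CommRing A] [IsDomain A] [IsNoetherianRing A] (n : ℕ)
    (hA : ringKrullDim A = (n : WithBot ℕ∞))
    {G F : Type*} [AddCommGroup G] [Module A G]
    [AddCommGroup F] [Module A F] [Module.Finite A F]
    (K : Submodule A G) (q : G →ₗ[A] F) (hF : IsPureDimMod A n F)
    (hloc : K.localized (⊥ : PrimeSpectrum A).asIdeal.primeCompl ≤
      (LinearMap.ker q).localized (⊥ : PrimeSpectrum A).asIdeal.primeCompl) :
    K ≤ LinearMap.ker q := by
  set N : Submodule A F := K.map q with hN
  by_cases hNbot : N = ⊥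
  · intro x hx
    have hqx : q x ∈ N := Submodule.mem_map_of_mem hx
    rw [hNbot, Submodule.mem_bot] at hqx
    exact LinearMap.mem_ker.mpr hqx
  exfalso
  have hdim := hF.2 N hNbot
  set p0 : PrimeSpectrum A := ⊥ with hp0def
  -- the generic point is not in the support of N
  have hp0 : p0 ∉ Module.support A ↥N := by
    rw [Module.notMem_support_iff']
    rintro ⟨y, hy⟩
    obtain ⟨x, hx, rfl⟩ := hy
    have hm : LocalizedModule.mkLinearMap p0.asIdeal.primeCompl G x ∈
        K.localized p0.asIdeal.primeCompl :=
      ⟨x, hx, 1, IsLocalizedModule.mk'_one _ _ _⟩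
    have hm2 := hloc hm
    have hm3 : LocalizedModule.mkLinearMap p0.asIdeal.primeCompl G x ∈
        LinearMap.ker (IsLocalizedModule.map p0.asIdeal.primeCompl
          (LocalizedModule.mkLinearMap p0.asIdeal.primeCompl G)
          (LocalizedModule.mkLinearMap p0.asIdeal.primeCompl F) q) := by
      rw [LinearMap.ker_localizedMap_eq_localized₀_ker]
      exact hm2
    rw [LinearMap.mem_ker, IsLocalizedModule.map_apply] at hm3
    have hm2 := hm3
    obtain ⟨r, hr, hre⟩ := LocalizedModule.mem_ker_mkLinearMap_iff.mp hm2
    exact ⟨r, hr, Subtype.ext hre⟩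
  -- N is finitely generated
  have hNfin : Module.Finite A ↥N := by
    have : IsNoetherian A F := inferInstance
    exact Module.Finite.iff_fg.mpr (IsNoetherian.noetherian N)
  -- annihilator is nonzero
  have hann : ∃ a ∈ Module.annihilator A ↥N, a ≠ 0 := by
    rw [Module.mem_support_iff_of_finite] at hp0
    obtain ⟨a, ha, ha'⟩ := SetLike.not_le_iff_exists.mp hp0
    exact ⟨a, ha, fun h => ha' (h ▸ Ideal.zero_mem _)⟩
  obtain ⟨a, haann, ha0⟩ := hann
  -- every chain in the support has length < n
  have hlen : ∀ c : LTSeries ↥(Module.support A ↥N), (c.length : ℕ) + 1 ≤ n := by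
    intro c
    have hmono : StrictMono (Subtype.val : ↥(Module.support A ↥N) → PrimeSpectrum A) :=
      fun _ _ h => h
    set c' := c.map Subtype.val hmono with hc'
    have hhead : p0 < c'.head := by
      have hmem : (c.head : PrimeSpectrum A) ∈ Module.support A ↥N := c.head.2
      rw [Module.mem_support_iff_of_finite] at hmem
      have : a ∈ (c.head : PrimeSpectrum A).asIdeal := hmem haann
      have hchead : c'.head = (c.head : PrimeSpectrum A) := rfl
      have hne : c'.head ≠ p0 := by
        intro h
        have h2 : (c.head : PrimeSpectrum A).asIdeal = (⊥ : Ideal A) := by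
          rw [← hchead, h]; rfl
        rw [h2] at this
        simp only [Ideal.mem_bot] at this
        exact ha0 this
      exact lt_of_le_of_ne bot_le (Ne.symm hne)
    set c'' := c'.cons p0 hhead with hc''
    have := Order.LTSeries.length_le_krullDim c''
    rw [show Order.krullDim (PrimeSpectrum A) = ringKrullDim A from rfl, hA] at this
    have hlen' : (c''.length : ℕ) = c.length + 1 := by
      rw [hc'', RelSeries.cons_length]
      rfl
    rw [hlen'] at this
    exact_mod_cast this
  -- contradiction with hdim
  haveI hnonempty : Nonempty ↥(Module.support A ↥N) := by
    by_contra h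
    rw [not_nonempty_iff] at h
    haveI := h
    rw [Order.krullDim_eq_bot] at hdim
    exact absurd hdim (by simp)
  have x0 := hnonempty.some
  have h1n : 1 ≤ n := by
    have := hlen (RelSeries.singleton _ x0)
    simpa using this
  rw [Order.krullDim_eq_iSup_length] at hdim
  have : (⨆ (p : LTSeries ↥(Module.support A ↥N)), (p.length : ℕ∞)) = (n : ℕ∞) := by
    exact_mod_cast hdim
  have hle : (n : ℕ∞) ≤ (n - 1 : ℕ) := by
    rw [← this]
    exact iSup_le fun c => by exact_mod_cast Nat.le_sub_one_of_lt (hlen c)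
  have : n ≤ n - 1 := by exact_mod_cast hle
  omega

/-- Pure quotients are determined by their restriction to a dense Zariski-open
subset (Lemma 4.1 of the paper), in the case of an integral (affine) scheme
`X = Spec A` of pure dimension `n`.  If `q₁ : G → F₁` and `q₂ : G → F₂` are two
surjections from a coherent sheaf `G` (a finitely generated `A`-module) onto
pure `n`-dimensional sheaves, whose kernels agree on a dense Zariski-open subset
`U` (i.e. have equal localizations at every point of `U`), then
`ker q₁ = ker q₂`, hence the two quotients coincide. -/
theorem pure_quotients_determined_generically
    {A : Type*} [CommRing A] [IsDomain A] [IsNoetherianRing A] (n : ℕ)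
    (hA : ringKrullDim A = (n : WithBot ℕ∞))
    {G F₁ F₂ : Type*} [AddCommGroup G] [Module A G] [Module.Finite A G]
    [AddCommGroup F₁] [Module A F₁] [AddCommGroup F₂] [Module A F₂]
    (q₁ : G →ₗ[A] F₁) (hq₁ : Function.Surjective q₁)
    (q₂ : G →ₗ[A] F₂) (hq₂ : Function.Surjective q₂)
    (hF₁ : IsPureDimMod A n F₁) (hF₂ : IsPureDimMod A n F₂)
    (U : Set (PrimeSpectrum A)) (hUopen : IsOpen U) (hUdense : Dense U)
    (hker : ∀ p ∈ U,
      (LinearMap.ker q₁).localized p.asIdeal.primeCompl =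
        (LinearMap.ker q₂).localized p.asIdeal.primeCompl) :
    LinearMap.ker q₁ = LinearMap.ker q₂ := by
  have hbot := bot_mem_of_dense_open hUopen hUdense
  have h := hker _ hbot
  have hF₁fin : Module.Finite A F₁ := Module.Finite.of_surjective q₁ hq₁
  have hF₂fin : Module.Finite A F₂ := Module.Finite.of_surjective q₂ hq₂
  exact le_antisymm
    (aux_le n hA _ q₂ hF₂ (le_of_eq h))
    (aux_le n hA _ q₁ hF₁ (le_of_eq h.symm))
end

section
/- On the chart ℂ^{r} ⊂ ℙ^{r} with w = (1, w₂, …, w_r), the (1,1)-form η := (i/2π) ∂∂̄ log(|f(z,w)|² + |w|²), where f(z,w) = Σⱼ wⱼ fⱼ(z) with fⱼ holomorphic in z ∈ ℂ and w treated as parameters, decomposes at a point where all fⱼ vanish as η = (i/2π)(|Σⱼ fⱼ'(z) wⱼ|² / |w|²) dz∧dz̄ + ω_FS, where ω_FS = (i/2π)∂∂̄ log|w|² is the Fubini–Study form in w; consequently η^{r} = (r·i/2π)(|Σⱼ fⱼ'(z) wⱼ|²/|w|²) dz∧dz̄ ∧ ω_FS^{r−1} at such a point, and η^{r+p} has vanishing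 fibre integral component for p > 0. -/
open scoped BigOperators

/-- The Wirtinger derivative `∂g/∂z = ½(∂g/∂x − i ∂g/∂y)`. -/
noncomputable def wirtD (g : ℂ → ℂ) (z : ℂ) : ℂ :=
  ((fderiv ℝ g z) 1 - Complex.I * (fderiv ℝ g z) Complex.I) / 2

/-- The conjugate Wirtinger derivative `∂g/∂z̄ = ½(∂g/∂x + i ∂g/∂y)`. -/
noncomputable def wirtDBar (g : ℂ → ℂ) (z : ℂ) : ℂ :=
  ((fderiv ℝ g z) 1 + Complex.I * (fderiv ℝ g z) Complex.I) / 2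

/-- The potential `log(|∑ⱼ wⱼ fⱼ(z)|² + |w|²)` of the form `η` of Lemma 3.6
(viewed as a complex-valued function for the purpose of differentiation). -/
noncomputable def etaPot {r : ℕ} (f : Fin r → ℂ → ℂ) (z : ℂ) (w : Fin r → ℂ) : ℂ :=
  (Real.log (‖∑ j, w j * f j z‖ ^ 2 + ∑ j, ‖w j‖ ^ 2) : ℂ)

/-- The Fubini–Study potential `log |w|²`. -/
noncomputable def fsPot {r : ℕ} (w : Fin r → ℂ) : ℂ :=
  (Real.log (∑ j, ‖w j‖ ^ 2) : ℂ)

section Helpers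
open Complex ComplexConjugate

noncomputable def Dm (F : ℂ → ℂ) (z : ℂ) : ℂ →L[ℝ] ℂ :=
  ((1 : ℂ →L[ℂ] ℂ).smulRight (deriv F z)).restrictScalars ℝ

lemma key (F : ℂ → ℂ) (hF : Differentiable ℂ F) (c : ℝ) (hc : 0 < c) (z : ℂ) :
    HasFDerivAt (fun z' => ((Real.log (‖F z'‖ ^ 2 + c) : ℝ) : ℂ))
      ((F z * conj (F z) + (c:ℂ))⁻¹ •
        (F z • ((conjCLE : ℂ ≃L[ℝ] ℂ).toContinuousLinearMap.comp (Dm F z))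
          + conj (F z) • Dm F z)) z := by
  have hD : HasFDerivAt F (Dm F z) z := ((hF z).hasDerivAt.hasFDerivAt).restrictScalars ℝ
  have hCD : HasFDerivAt (fun z' => conj (F z'))
      ((conjCLE : ℂ ≃L[ℝ] ℂ).toContinuousLinearMap.comp (Dm F z)) z :=
    (conjCLE.hasFDerivAt).comp z hD
  have hU : HasFDerivAt (fun z' => F z' * conj (F z') + (c:ℂ))
      (F z • ((conjCLE : ℂ ≃L[ℝ] ℂ).toContinuousLinearMap.comp (Dm F z))
        + conj (F z) • Dm F z) z := (hD.mul hCD).add_const _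
  have hpos : (0:ℝ) < Complex.normSq (F z) + c := by
    have := Complex.normSq_nonneg (F z); linarith
  have hslit : (F z * conj (F z) + (c:ℂ)) ∈ slitPlane := by
    rw [Complex.mul_conj]
    refine Or.inl ?_
    simpa using hpos
  have hlog : HasDerivAt Complex.log (F z * conj (F z) + (c:ℂ))⁻¹
      (F z * conj (F z) + (c:ℂ)) := Complex.hasDerivAt_log hslit
  have hcomp := (hlog.hasFDerivAt.restrictScalars ℝ).comp z hU
  have heq : (fun z' => ((Real.log (‖F z'‖ ^ 2 + c) : ℝ) : ℂ)) =
      (fun z' => Complex.log (F z' * conj (F z') + (c:ℂ))) := by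
    funext z'
    rw [Complex.mul_conj]
    have hpos' : (0:ℝ) < Complex.normSq (F z') + c := by
      have := Complex.normSq_nonneg (F z'); linarith
    rw [Complex.sq_norm]
    rw [show ((Complex.normSq (F z') : ℂ) + (c:ℂ)) = ((Complex.normSq (F z') + c : ℝ) : ℂ) by
      push_cast; ring]
    rw [Complex.ofReal_log hpos'.le]
  rw [heq]
  refine hcomp.congr_fderiv ?_
  ext v
  simp [ContinuousLinearMap.smul_apply, smul_eq_mul]
  ring

lemma wirtDBar_key (F : ℂ → ℂ) (hF : Differentiable ℂ F) (c : ℝ) (hc : 0 < c) (z : ℂ) :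
    wirtDBar (fun z' => ((Real.log (‖F z'‖ ^ 2 + c) : ℝ) : ℂ)) z =
      F z * conj (deriv F z) * (F z * conj (F z) + (c:ℂ))⁻¹ := by
  unfold wirtDBar
  rw [(key F hF c hc z).fderiv]
  simp only [ContinuousLinearMap.smul_apply, ContinuousLinearMap.add_apply,
    ContinuousLinearMap.coe_comp', Function.comp_apply, Dm,
    ContinuousLinearMap.coe_restrictScalars', ContinuousLinearMap.smulRight_apply,
    ContinuousLinearMap.one_apply, smul_eq_mul, ContinuousLinearEquiv.coe_coe,
    Complex.conjCLE_apply, map_mul, Complex.conj_I, one_mul]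
  set u := (F z * conj (F z) + (c:ℂ))⁻¹
  set d := deriv F z
  linear_combination (u * (d * conj (F z) - F z * conj d) / 2) * Complex.I_mul_I

lemma wirtD_outer (F : ℂ → ℂ) (hF : Differentiable ℂ F) (hdF : Differentiable ℂ (deriv F))
    (c : ℝ) (hc : 0 < c) (z₀ : ℂ) (h0 : F z₀ = 0) :
    wirtD (fun z => wirtDBar (fun z' => ((Real.log (‖F z'‖ ^ 2 + c) : ℝ) : ℂ)) z) z₀
      = deriv F z₀ * conj (deriv F z₀) * ((c:ℂ))⁻¹ := by
  have hfun : (fun z => wirtDBar (fun z' => ((Real.log (‖F z'‖ ^ 2 + c) : ℝ) : ℂ)) z)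
      = fun z => F z * (conj (deriv F z) * (F z * conj (F z) + (c:ℂ))⁻¹) := by
    funext z; rw [wirtDBar_key F hF c hc z]; ring
  rw [hfun]
  set G := fun z => conj (deriv F z) * (F z * conj (F z) + (c:ℂ))⁻¹ with hG
  have hconjF : DifferentiableAt ℝ (fun z => conj (F z)) z₀ :=
    (Complex.conjCLE.differentiable.differentiableAt).comp z₀ ((hF z₀).restrictScalars ℝ)
  have hGdiff : DifferentiableAt ℝ G z₀ := by
    apply DifferentiableAt.mul
    · exact (Complex.conjCLE.differentiable.differentiableAt).comp z₀
        ((hdF z₀).restrictScalars ℝ)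
    · apply DifferentiableAt.inv
      · exact (((hF z₀).restrictScalars ℝ).mul hconjF).add_const _
      · rw [h0]; simpa using hc.ne'
  have hD : HasFDerivAt F (Dm F z₀) z₀ := ((hF z₀).hasDerivAt.hasFDerivAt).restrictScalars ℝ
  have hprod : HasFDerivAt (fun z => F z * G z)
      (F z₀ • fderiv ℝ G z₀ + G z₀ • Dm F z₀) z₀ := hD.mul hGdiff.hasFDerivAt
  unfold wirtD
  rw [hprod.fderiv]
  simp only [h0, zero_smul, zero_add, ContinuousLinearMap.smul_apply, Dm,
    ContinuousLinearMap.coe_restrictScalars', ContinuousLinearMap.smulRight_apply,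
    ContinuousLinearMap.one_apply, smul_eq_mul, one_mul, hG, map_zero, zero_mul,
    mul_zero]
  set d := deriv F z₀
  linear_combination (-(conj d * ((0:ℂ) + (c:ℂ))⁻¹ * d) / 2) * Complex.I_mul_I

lemma wirtD_vanish (F : ℂ → ℂ) (hF : Differentiable ℂ F) (c : ℝ) (hc : 0 < c)
    (z₀ : ℂ) (h0 : F z₀ = 0) :
    wirtD (fun z => ((Real.log (‖F z‖ ^ 2 + c) : ℝ) : ℂ)) z₀ = 0 := by
  unfold wirtD
  rw [(key F hF c hc z₀).fderiv]
  simp [h0]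


end Helpers

open Complex ComplexConjugate

/-- The computation inside Lemma 3.6: at a point `z₀` where all the holomorphic
functions `fⱼ` vanish, the `(1,1)`-form `η = (i/2π) ∂∂̄ log(|∑ⱼ wⱼfⱼ(z)|² + |w|²)`
decomposes as `(i/2π)(|∑ⱼ fⱼ'(z₀)wⱼ|²/|w|²) dz∧dz̄ + ω_FS`.  In coordinates this
means: the `(z,z̄)`-coefficient `∂_z∂_z̄ log(…)` equals `|∑ⱼ wⱼ fⱼ'(z₀)|²/|w|²`,
the mixed `(z, w̄ₖ)`-coefficients vanish, and the `(wⱼ, w̄ₖ)`-coefficients agree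
with those of the Fubini–Study potential `log |w|²`. -/
theorem eta_decomposition_at_vanishing_point {r : ℕ}
    (f : Fin r → ℂ → ℂ) (hf : ∀ j, Differentiable ℂ (f j))
    (z₀ : ℂ) (hz : ∀ j, f j z₀ = 0)
    (w : Fin r → ℂ) (hw : w ≠ 0) :
    (wirtD (fun z => wirtDBar (fun z' => etaPot f z' w) z) z₀ =
      (‖∑ j, w j * deriv (f j) z₀‖ : ℂ) ^ 2 /
        ∑ j, (‖w j‖ : ℂ) ^ 2) ∧
    (∀ k : Fin r,
      wirtDBar (fun t => wirtD (fun z => etaPot f z (Function.update w k t)) z₀)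
        (w k) = 0) ∧
    (∀ j k : Fin r,
      wirtD (fun s =>
          wirtDBar (fun t => etaPot f z₀ (Function.update (Function.update w j s) k t))
            (Function.update w j s k)) (w j) =
        wirtD (fun s =>
          wirtDBar (fun t => fsPot (Function.update (Function.update w j s) k t))
            (Function.update w j s k)) (w j)) := by
  -- generic facts
  have hFgen : ∀ w' : Fin r → ℂ, Differentiable ℂ (fun z => ∑ j, w' j * f j z) := by
    intro w'
    apply Differentiable.fun_sum
    intro j _
    exact (hf j).const_mul (w' j)
  have hcgen : ∀ w' : Fin r → ℂ, w' ≠ 0 → 0 < ∑ j, ‖w' j‖ ^ 2 := by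
    intro w' hw'
    obtain ⟨j, hj⟩ := Function.ne_iff.mp hw'
    have h1 : 0 < ‖w' j‖ ^ 2 := by
      have h2 : 0 < ‖w' j‖ := norm_pos_iff.mpr hj
      positivity
    exact lt_of_lt_of_le h1
      (Finset.single_le_sum (f := fun i => ‖w' i‖ ^ 2)
        (fun i _ => by positivity) (Finset.mem_univ j))
  have hF0gen : ∀ w' : Fin r → ℂ, (∑ j, w' j * f j z₀) = 0 := by
    intro w'; simp [hz]
  refine ⟨?_, ?_, ?_⟩
  · -- part 1
    set F := fun z => ∑ j, w j * f j z with hFdef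
    set c := ∑ j, ‖w j‖ ^ 2 with hcdef
    have hc : 0 < c := hcgen w hw
    have hF : Differentiable ℂ F := hFgen w
    have hderivF : ∀ z, HasDerivAt F (∑ j, w j * deriv (f j) z) z := by
      intro z
      exact HasDerivAt.fun_sum fun j _ => ((hf j z).hasDerivAt.const_mul (w j))
    have hderiv_eq : deriv F = fun z => ∑ j, w j * deriv (f j) z :=
      funext fun z => (hderivF z).deriv
    have hdF : Differentiable ℂ (deriv F) := by
      rw [hderiv_eq]
      apply Differentiable.fun_sum
      intro j _
      have hAn : AnalyticOnNhd ℂ (f j) Set.univ := fun t _ => (hf j).analyticAt t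
      have : Differentiable ℂ (deriv (f j)) :=
        fun z => ((hAn.deriv) z (Set.mem_univ z)).differentiableAt
      exact this.const_mul (w j)
    have hF0 : F z₀ = 0 := hF0gen w
    have h := wirtD_outer F hF hdF c hc z₀ hF0
    have hshow : (fun z => wirtDBar (fun z' => etaPot f z' w) z)
        = fun z => wirtDBar (fun z' => ((Real.log (‖F z'‖ ^ 2 + c) : ℝ) : ℂ)) z := rfl
    rw [hshow, h, (hderivF z₀).deriv]
    set d := ∑ j, w j * deriv (f j) z₀
    rw [show (∑ j, ((‖w j‖ : ℝ) : ℂ) ^ 2) = ((c : ℝ) : ℂ) by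
      rw [hcdef]; push_cast; ring]
    rw [show ((‖d‖ : ℝ) : ℂ) ^ 2 = d * conj d by
      rw [← Complex.ofReal_pow, Complex.sq_norm, Complex.mul_conj]]
    rw [div_eq_mul_inv]
  · -- part 2
    intro k
    have hall : ∀ w' : Fin r → ℂ, wirtD (fun z => etaPot f z w') z₀ = 0 := by
      intro w'
      by_cases hw' : w' = 0
      · subst hw'
        have : (fun z => etaPot f z (0 : Fin r → ℂ)) = fun _ => (0 : ℂ) := by
          funext z; simp [etaPot]
        rw [this]
        simp [wirtD]
      · have hc' : 0 < ∑ j, ‖w' j‖ ^ 2 := hcgen w' hw'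
        have := wirtD_vanish (fun z => ∑ j, w' j * f j z) (hFgen w') _ hc' z₀ (hF0gen w')
        exact this
    have : (fun t => wirtD (fun z => etaPot f z (Function.update w k t)) z₀)
        = fun _ => (0 : ℂ) := funext fun t => hall _
    rw [this]
    simp [wirtDBar]
  · -- part 3
    intro j k
    have hEq : etaPot f z₀ = fsPot := by
      funext v
      simp [etaPot, fsPot, hz]
    rw [hEq]
end
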